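/- Let 0 < β ≤ 1, c > 0 and r ≥ 0. Then the infinite products ∏_{k=1}^∞ (1 − β·γ̃(k, (c/β) r²)) and ∏_{k=2}^∞ (1 − β·γ̃(k, (c/β) r²)) both converge to strictly positive real numbers, and their ratio satisfies ( ∏_{k=2}^∞ (1 − β·γ̃(k, (c/β) r²)) ) / ( ∏_{k=1}^∞ (1 − β·γ̃(k, (c/β) r²)) ) = 1 / ( 1 − β + β e^{−(c/β) r²} ). -/

import Mathlib

open Real Filter Topology MeasureTheory

/-- The normalized lower incomplete gamma function `γ̃(a,x) = (1/Γ(a)) ∫₀ˣ e^{−u} u^{a−1} du`. -/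
noncomputable def normLowerGamma (a x : ℝ) : ℝ :=
  (∫ u in (0 : ℝ)..x, Real.exp (-u) * u ^ (a - 1)) / Real.Gamma a

lemma hasDerivAt_aux (k : ℕ) (u : ℝ) :
    HasDerivAt (fun t : ℝ =>
        -(Real.exp (-t) * ∑ j ∈ Finset.range (k+1), ((k.factorial : ℝ) / j.factorial) * t ^ j))
      (Real.exp (-u) * u ^ k) u := by
  have hexp : HasDerivAt (fun t : ℝ => Real.exp (-t)) (Real.exp (-u) * (-1)) u :=
    (Real.hasDerivAt_exp (-u)).comp u (hasDerivAt_neg u)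
  have hP : HasDerivAt (fun t : ℝ => ∑ j ∈ Finset.range (k+1), ((k.factorial : ℝ) / j.factorial) * t ^ j)
      (∑ j ∈ Finset.range (k+1), ((k.factorial : ℝ) / j.factorial) * (j * u ^ (j-1))) u := by
    apply HasDerivAt.fun_sum
    intro j _
    exact (hasDerivAt_pow j u).const_mul _
  have hsum : (∑ j ∈ Finset.range (k+1), ((k.factorial : ℝ) / j.factorial) * (j * u ^ (j-1)))
      = ∑ j ∈ Finset.range k, ((k.factorial : ℝ) / j.factorial) * u ^ j := by
    rw [Finset.sum_range_succ']
    simp only [Nat.cast_zero, zero_mul, mul_zero, add_zero]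
    apply Finset.sum_congr rfl
    intro i _
    have h1 : ((i+1).factorial : ℝ) = (i+1) * i.factorial := by
      rw [Nat.factorial_succ]; push_cast; ring
    have h2 : (i.factorial : ℝ) ≠ 0 := Nat.cast_ne_zero.2 (Nat.factorial_ne_zero i)
    have h3 : ((i+1).factorial : ℝ) ≠ 0 := Nat.cast_ne_zero.2 (Nat.factorial_ne_zero (i+1))
    have h4 : ((i:ℝ)+1) ≠ 0 := by positivity
    simp only [Nat.add_sub_cancel]
    push_cast
    field_simp [h1]
    rw [h1]; ring
  rw [hsum] at hP
  have := (hexp.fun_mul hP).fun_neg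
  refine this.congr_deriv ?_
  rw [Finset.sum_range_succ]
  have h2 : (k.factorial : ℝ) ≠ 0 := Nat.cast_ne_zero.2 (Nat.factorial_ne_zero k)
  field_simp
  ring

lemma integral_exp_pow (k : ℕ) (x : ℝ) :
    ∫ u in (0:ℝ)..x, Real.exp (-u) * u ^ k
      = (k.factorial : ℝ) * (1 - Real.exp (-x) * ∑ j ∈ Finset.range (k+1), x ^ j / j.factorial) := by
  have hcont : Continuous fun u : ℝ => Real.exp (-u) * u ^ k := by continuity
  rw [intervalIntegral.integral_eq_sub_of_hasDerivAt (fun u _ => hasDerivAt_aux k u)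
    (hcont.intervalIntegrable 0 x)]
  have hF0 : -(Real.exp (-(0:ℝ)) * ∑ j ∈ Finset.range (k+1),
      ((k.factorial : ℝ) / j.factorial) * (0:ℝ) ^ j) = -(k.factorial : ℝ) := by
    rw [Finset.sum_range_succ']
    simp
  rw [hF0]
  have hS : (k.factorial : ℝ) * ∑ j ∈ Finset.range (k+1), x ^ j / j.factorial
      = ∑ j ∈ Finset.range (k+1), ((k.factorial : ℝ) / j.factorial) * x ^ j := by
    rw [Finset.mul_sum]
    exact Finset.sum_congr rfl fun j _ => by rw [div_mul_eq_mul_div, mul_div_assoc]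
  rw [mul_sub, mul_one, ← mul_assoc, mul_comm ((k.factorial : ℝ)) (Real.exp (-x)), mul_assoc, hS]
  ring

lemma normLowerGamma_nat (k : ℕ) (x : ℝ) :
    normLowerGamma (k + 1) x
      = 1 - Real.exp (-x) * ∑ j ∈ Finset.range (k+1), x ^ j / j.factorial := by
  unfold normLowerGamma
  have h1 : ((k:ℝ) + 1) - 1 = (k:ℝ) := by ring
  rw [h1]
  simp only [Real.rpow_natCast]
  rw [Real.Gamma_nat_eq_factorial, integral_exp_pow]
  have h2 : (k.factorial : ℝ) ≠ 0 := Nat.cast_ne_zero.2 (Nat.factorial_ne_zero k)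
  field_simp

lemma nlg_nonneg (k : ℕ) {x : ℝ} (hx : 0 ≤ x) : 0 ≤ normLowerGamma (k + 1) x := by
  unfold normLowerGamma
  apply div_nonneg
  · apply intervalIntegral.integral_nonneg hx
    intro u hu
    exact mul_nonneg (Real.exp_nonneg _) (Real.rpow_nonneg hu.1 _)
  · exact (Real.Gamma_pos_of_pos (by positivity)).le

lemma one_sub_nlg (k : ℕ) {x : ℝ} (hx : 0 ≤ x) :
    Real.exp (-x) ≤ 1 - normLowerGamma (k + 1) x := by
  rw [normLowerGamma_nat]
  have h1 : (1:ℝ) ≤ ∑ j ∈ Finset.range (k+1), x ^ j / j.factorial := by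
    calc (1:ℝ) = ∑ j ∈ Finset.range 1, x ^ j / j.factorial := by simp
    _ ≤ _ := Finset.sum_le_sum_of_subset_of_nonneg
        (Finset.range_subset_range.2 (by omega)) (fun j _ _ => by positivity)
  nlinarith [Real.exp_pos (-x)]

lemma nlg_le (k : ℕ) {x : ℝ} (hx : 0 ≤ x) :
    normLowerGamma (k + 1) x ≤ x ^ (k+1) / (k+1).factorial := by
  unfold normLowerGamma
  have h1 : ((k:ℝ) + 1) - 1 = (k:ℝ) := by ring
  rw [h1]
  simp only [Real.rpow_natCast]
  rw [Real.Gamma_nat_eq_factorial]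
  have hmono : (∫ u in (0:ℝ)..x, Real.exp (-u) * u ^ k) ≤ ∫ u in (0:ℝ)..x, u ^ k := by
    apply intervalIntegral.integral_mono_on hx
    · exact (by continuity : Continuous fun u : ℝ => Real.exp (-u) * u ^ k).intervalIntegrable 0 x
    · exact (continuous_pow k).intervalIntegrable 0 x
    · intro u hu
      have h2 : Real.exp (-u) ≤ 1 := Real.exp_le_one_iff.2 (by linarith [hu.1])
      have h3 : (0:ℝ) ≤ u ^ k := pow_nonneg hu.1 k
      nlinarith
  have h4 : (∫ u in (0:ℝ)..x, u ^ k) = x ^ (k+1) / (k+1) := by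
    rw [integral_pow]; simp
  have h5 : (0:ℝ) < k.factorial := by positivity
  rw [div_le_div_iff₀ h5 (by positivity)]
  have h6 : ((k+1).factorial : ℝ) = (k+1) * k.factorial := by
    rw [Nat.factorial_succ]; push_cast; ring
  calc (∫ u in (0:ℝ)..x, Real.exp (-u) * u ^ k) * ((k+1).factorial : ℝ)
      ≤ (x ^ (k+1) / (k+1)) * ((k+1).factorial : ℝ) := by
        apply mul_le_mul_of_nonneg_right (hmono.trans h4.le) (by positivity)
    _ = x ^ (k+1) * (k.factorial : ℝ) := by rw [h6]; field_simp

set_option maxHeartbeats 1000000 in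
/-- For the scaled β-Ginibre point process, the infinite products
`∏_{k=1}^∞ (1 − β γ̃(k, (c/β)r²))` (the complementary empty space function `1 − F(r)`) and
`∏_{k=2}^∞ (1 − β γ̃(k, (c/β)r²))` (the complementary nearest-neighbor distance distribution
`1 − G(r)`) converge to strictly positive reals, and their ratio — the J function — equals
`1/(1 − β + β e^{−(c/β)r²})`. -/
theorem ginibre_J_function_formula (β c r : ℝ) (hβ0 : 0 < β) (hβ1 : β ≤ 1) (hc : 0 < c)
    (hr : 0 ≤ r) :
    Multipliable (fun k : ℕ => 1 - β * normLowerGamma (k + 1) ((c / β) * r ^ 2)) ∧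
    0 < (∏' k : ℕ, (1 - β * normLowerGamma (k + 1) ((c / β) * r ^ 2))) ∧
    Multipliable (fun k : ℕ => 1 - β * normLowerGamma (k + 2) ((c / β) * r ^ 2)) ∧
    0 < (∏' k : ℕ, (1 - β * normLowerGamma (k + 2) ((c / β) * r ^ 2))) ∧
    (∏' k : ℕ, (1 - β * normLowerGamma (k + 2) ((c / β) * r ^ 2))) /
        (∏' k : ℕ, (1 - β * normLowerGamma (k + 1) ((c / β) * r ^ 2)))
      = 1 / (1 - β + β * Real.exp (-(c / β) * r ^ 2)) := by
  set x := (c / β) * r ^ 2 with hxdef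
  have hx : 0 ≤ x := by positivity
  set g : ℕ → ℝ := fun k => 1 - β * normLowerGamma (k + 1) x with hg
  have hshift : (fun k : ℕ => 1 - β * normLowerGamma (k + 2) x) = fun k => g (k + 1) := by
    funext k
    have h : ((k:ℝ) + 2) = (((k+1 : ℕ)):ℝ) + 1 := by push_cast; ring
    rw [h]
  have hgelow : ∀ k, Real.exp (-x) ≤ g k := by
    intro k
    have h1 := one_sub_nlg k hx
    have h0 := nlg_nonneg k hx
    simp only [hg]
    nlinarith
  have hgpos : ∀ k, 0 < g k := fun k => lt_of_lt_of_le (Real.exp_pos _) (hgelow k)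
  have hgle : ∀ k, g k ≤ 1 := by
    intro k
    have h0 := nlg_nonneg k hx
    simp only [hg]
    nlinarith
  have hsummable : Summable fun k : ℕ => Real.log (g k) := by
    apply Summable.of_norm_bounded (g :=
      (fun k => Real.exp x * (β * (x ^ (k+1) / ((k+1).factorial : ℝ)))))
    · exact (((summable_nat_add_iff 1).2
        (Real.summable_pow_div_factorial x)).mul_left β).mul_left (Real.exp x)
    · intro k
      have h1 : Real.log (g k) ≤ 0 := Real.log_nonpos (hgpos k).le (hgle k)
      rw [Real.norm_eq_abs, abs_of_nonpos h1]
      have h3 : Real.log (g k)⁻¹ ≤ (g k)⁻¹ - 1 := Real.log_le_sub_one_of_pos (by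
        exact inv_pos.2 (hgpos k))
      have h4 : (g k)⁻¹ ≤ Real.exp x := by
        have := inv_anti₀ (Real.exp_pos (-x)) (hgelow k)
        rwa [Real.exp_neg, inv_inv] at this
      have h5 : (g k)⁻¹ - 1 = (1 - g k) * (g k)⁻¹ := by
        rw [sub_mul, one_mul, mul_inv_cancel₀ (hgpos k).ne']
      have h6 : (1 - g k) * (g k)⁻¹ ≤ (1 - g k) * Real.exp x :=
        mul_le_mul_of_nonneg_left h4 (by linarith [hgle k])
      have h7 : 1 - g k ≤ β * (x ^ (k+1) / ((k+1).factorial : ℝ)) := by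
        have hle := nlg_le k hx
        have h0 := nlg_nonneg k hx
        simp only [hg]
        nlinarith
      have h8 : (1 - g k) * Real.exp x ≤ Real.exp x * (β * (x ^ (k+1) / ((k+1).factorial : ℝ))) := by
        nlinarith [Real.exp_pos x]
      rw [← Real.log_inv]
      linarith
  have hprod : HasProd g (Real.exp (∑' k, Real.log (g k))) := by
    have h := hsummable.hasSum.rexp
    rwa [show (Real.exp ∘ fun k => Real.log (g k)) = g from
      funext fun n => Real.exp_log (hgpos n)] at h
  have hm1 : Multipliable g := ⟨_, hprod⟩
  have hpos1 : 0 < ∏' k, g k := by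
    rw [hprod.tprod_eq]; exact Real.exp_pos _
  have hs2 : Summable fun k : ℕ => Real.log (g (k + 1)) :=
    (summable_nat_add_iff 1).2 hsummable
  have hprod2 : HasProd (fun k => g (k + 1)) (Real.exp (∑' k, Real.log (g (k + 1)))) := by
    have h := hs2.hasSum.rexp
    rwa [show (Real.exp ∘ fun k => Real.log (g (k + 1))) = fun k => g (k + 1) from
      funext fun n => Real.exp_log (hgpos _)] at h
  have hm2 : Multipliable fun k => g (k + 1) := ⟨_, hprod2⟩
  have hpos2 : 0 < ∏' k, g (k + 1) := by
    rw [hprod2.tprod_eq]; exact Real.exp_pos _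
  have key : ∏' k, g k = g 0 * ∏' k, g (k + 1) := tprod_eq_zero_mul' hm2
  have hg0 : g 0 = 1 - β + β * Real.exp (-x) := by
    simp only [hg]
    rw [show ((0:ℕ):ℝ) + 1 = ((0:ℕ):ℝ) + 1 from rfl, normLowerGamma_nat 0 x]
    simp
    ring
  refine ⟨hm1, hpos1, ?_, ?_, ?_⟩
  · rw [hshift]; exact hm2
  · rw [hshift]; exact hpos2
  · rw [hshift, key, show -(c / β) * r ^ 2 = -x by rw [hxdef]; ring, ← hg0]
    rw [mul_comm, ← div_div, div_self hpos2.ne']
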